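/- arXiv:1305.7182 — 2 statements merged into one kernel-verified Lean document; each statement's English description precedes it below -/
import Mathlib

section
/- Under the surplus-based algorithm with parameters satisfying (P1)–(P4) and initial surpluses s_i(0) = 0, the surplus of every agent is nonnegative at every time: s_i(k) ≥ 0 for all i and all k. -/
/-- Under the surplus-based algorithm with (P1)-(P4) and zero initial surpluses,
every surplus is nonnegative at every time. `E k j i` means edge (j,i) at time `k`,
i.e. `j` is an in-neighbor of `i` (equivalently `i` is an out-neighbor of `j`). -/
theorem stmt_1 {n : ℕ} (E : ℕ → Fin n → Fin n → Prop)
    (x s : ℕ → Fin n → ℝ)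
    (a b : ℕ → Fin n → Fin n → ℝ)  -- a k i j : updating weight; b k i h : sending weight
    (ε c : ℕ → Fin n → ℝ)
    (hε : ∀ k i, 0 < ε k i ∧ ε k i < 1)                                 -- (P1)
    (ha : ∀ k i j, (E k j i → 0 < a k i j ∧ a k i j < 1) ∧ (¬ E k j i → a k i j = 0))  -- (P2)
    (hasum : ∀ k i, ∑ j, a k i j < 1)                                   -- (P2)
    (hb : ∀ k i h, (E k i h → 0 < b k i h ∧ b k i h < 1) ∧ (¬ E k i h → b k i h = 0))  -- (P3)
    (hbsum : ∀ k i, ∑ h, b k i h < 1 - ε k i)                           -- (P3)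
    (hc : ∀ k i, c k i = if (∑ j, a k i j * (x k j - x k i)) ≤ 0 then 1 else 0) -- (P4)
    (hs0 : ∀ i, s 0 i = 0)
    (hx : ∀ k i, x (k+1) i =
      x k i + c k i * (∑ j, a k i j * (x k j - x k i)) + ε k i * s k i)
    (hsupd : ∀ k i, s (k+1) i =
      (1 - ∑ h, b k i h) * s k i + (∑ j, b k j i * s k j) - (x (k+1) i - x k i)) :
    ∀ k i, 0 ≤ s k i := by
  intro k
  induction k with
  | zero => intro i; rw [hs0]
  | succ k ih =>
    intro i
    have hbnn : ∀ j h, 0 ≤ b k j h := by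
      intro j h
      by_cases he : E k j h
      · exact le_of_lt ((hb k j h).1 he).1
      · rw [(hb k j h).2 he]
    have hA : c k i * (∑ j, a k i j * (x k j - x k i)) ≤ 0 := by
      rw [hc]
      by_cases hA0 : (∑ j, a k i j * (x k j - x k i)) ≤ 0
      · simpa [hA0] using hA0
      · simp [hA0]
    have h1 : 0 ≤ (1 - ∑ h, b k i h - ε k i) * s k i :=
      mul_nonneg (by linarith [hbsum k i]) (ih i)
    have h2 : 0 ≤ ∑ j, b k j i * s k j :=
      Finset.sum_nonneg fun j _ => mul_nonneg (hbnn j i) (ih j)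
    have := hsupd k i
    rw [hx k i] at this
    nlinarith [this]
end

section
/- Under the surplus-based algorithm with parameters satisfying (P1)–(P4) and nonnegative surpluses, the minimum state m(x(k)) := min_i x_i(k) is non-decreasing in k: if k₁ ≤ k₂ then m(x(k₁)) ≤ m(x(k₂)). -/
/-- Under the surplus-based algorithm with (P1)-(P4) and nonnegative surpluses,
the minimum state is non-decreasing in time. -/
theorem stmt_2 {n : ℕ} (hn : 0 < n) (E : ℕ → Fin n → Fin n → Prop)
    (x s : ℕ → Fin n → ℝ)
    (a : ℕ → Fin n → Fin n → ℝ)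
    (ε c : ℕ → Fin n → ℝ)
    (hε : ∀ k i, 0 < ε k i ∧ ε k i < 1)
    (ha : ∀ k i j, (E k j i → 0 < a k i j ∧ a k i j < 1) ∧ (¬ E k j i → a k i j = 0))
    (hasum : ∀ k i, ∑ j, a k i j < 1)
    (hc : ∀ k i, c k i = if (∑ j, a k i j * (x k j - x k i)) ≤ 0 then 1 else 0)
    (hs : ∀ k i, 0 ≤ s k i)
    (hx : ∀ k i, x (k+1) i =
      x k i + c k i * (∑ j, a k i j * (x k j - x k i)) + ε k i * s k i) :
    ∀ k₁ k₂ : ℕ, k₁ ≤ k₂ →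
      Finset.univ.inf' (Finset.univ_nonempty_iff.mpr ⟨⟨0, hn⟩⟩) (x k₁)
        ≤ Finset.univ.inf' (Finset.univ_nonempty_iff.mpr ⟨⟨0, hn⟩⟩) (x k₂) := by
  have hne : (Finset.univ : Finset (Fin n)).Nonempty := Finset.univ_nonempty_iff.mpr ⟨⟨0, hn⟩⟩
  have ha0 : ∀ k i j, 0 ≤ a k i j := by
    intro k i j
    by_cases h : E k j i
    · exact ((ha k i j).1 h).1.le
    · rw [(ha k i j).2 h]
  have step : ∀ k, Finset.univ.inf' hne (x k) ≤ Finset.univ.inf' hne (x (k+1)) := by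
    intro k
    apply Finset.le_inf'
    intro i _
    set m := Finset.univ.inf' hne (x k) with hm
    have hmi : ∀ j : Fin n, m ≤ x k j := fun j => Finset.inf'_le _ (Finset.mem_univ j)
    have hεs : 0 ≤ ε k i * s k i := mul_nonneg (hε k i).1.le (hs k i)
    rw [hx k i]
    by_cases h : (∑ j, a k i j * (x k j - x k i)) ≤ 0
    · have hc1 : c k i = 1 := by rw [hc k i, if_pos h]
      rw [hc1, one_mul]
      have key : m ≤ x k i + ∑ j, a k i j * (x k j - x k i) := by
        have hexp : x k i + ∑ j, a k i j * (x k j - x k i)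
            = (1 - ∑ j, a k i j) * x k i + ∑ j, a k i j * x k j := by
          simp only [mul_sub, Finset.sum_sub_distrib, Finset.mul_sum, sub_mul, one_mul,
            Finset.sum_const, nsmul_eq_mul]
          rw [← Finset.sum_mul]; ring
        rw [hexp]
        have h1 : (1 - ∑ j, a k i j) * m ≤ (1 - ∑ j, a k i j) * x k i :=
          mul_le_mul_of_nonneg_left (hmi i) (by linarith [hasum k i])
        have h2 : (∑ j, a k i j) * m ≤ ∑ j, a k i j * x k j := by
          rw [Finset.sum_mul]
          exact Finset.sum_le_sum fun j _ => mul_le_mul_of_nonneg_left (hmi j) (ha0 k i j)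
        nlinarith
      linarith
    · have hc0 : c k i = 0 := by rw [hc k i, if_neg h]
      rw [hc0, zero_mul]
      have := hmi i
      linarith
  intro k₁ k₂ h
  induction h with
  | refl => exact le_refl _
  | step h ih => exact le_trans ih (step _)
end
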